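/- Let b₁ ≥ 0 be a natural number. Let α : ℂ[x₁,…,x₆] → ℂ[y₁^{±1}, y₂^{±1}, y₃^{±1}] be the ℂ-algebra homomorphism determined by α(x₁) = y₁, α(x₂) = y₁, α(x₃) = y₂, α(x₄) = y₁y₂^{−1}, α(x₅) = y₁^{−b₁−1}y₂y₃, α(x₆) = y₃. Then the kernel of α equals the ideal generated by the three binomials x₁ − x₃x₄, x₂ − x₃x₄, and x₃^{b₁} x₄^{b₁+1} x₅ − x₆. -/

import Mathlib

open MvPolynomial

/-- The Laurent monomial `y₁^{v 0} y₂^{v 1} y₃^{v 2}` in the Laurent polynomial ring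
`ℂ[y₁^{±1}, y₂^{±1}, y₃^{±1}]`, realized as `AddMonoidAlgebra ℂ (Fin 3 → ℤ)`. -/
noncomputable def laurentMonomial3 (v : Fin 3 → ℤ) : AddMonoidAlgebra ℂ (Fin 3 → ℤ) :=
  AddMonoidAlgebra.single v 1

lemma lm_mul (u v : Fin 3 → ℤ) :
    laurentMonomial3 u * laurentMonomial3 v = laurentMonomial3 (u + v) := by
  simp [laurentMonomial3, AddMonoidAlgebra.single_mul_single]

lemma lm_pow (u : Fin 3 → ℤ) (n : ℕ) :
    laurentMonomial3 u ^ n = laurentMonomial3 (n • u) := by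
  simp [laurentMonomial3, AddMonoidAlgebra.single_pow]

/-- The exponent map `ℕ³ → ℤ³` of the restricted monomial algebra map. -/
def expMap3 (b₁ : ℕ) (d : Fin 3 →₀ ℕ) : Fin 3 → ℤ :=
  ![(d 1 : ℤ) - ((b₁ : ℤ) + 1) * d 2, (d 0 : ℤ) - d 1 + d 2, (d 2 : ℤ)]

lemma expMap3_inj (b₁ : ℕ) : Function.Injective (expMap3 b₁) := by
  intro d d' h
  have h0 := congrFun h 0
  have h1 := congrFun h 1
  have h2 := congrFun h 2
  simp only [expMap3, Matrix.cons_val_zero, Matrix.cons_val_one, Matrix.head_cons,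
    Matrix.cons_val_two, Matrix.tail_cons] at h0 h1 h2
  have e2 : d 2 = d' 2 := by exact_mod_cast h2
  rw [e2] at h0 h1
  have e1 : d 1 = d' 1 := by
    have := sub_left_inj.mp h0
    exact_mod_cast this
  rw [e1] at h1
  have e0 : d 0 = d' 0 := by omega
  ext i
  fin_cases i <;> assumption

lemma aeval_eq_mapDomain (b₁ : ℕ) (p : MvPolynomial (Fin 3) ℂ) :
    (aeval ![laurentMonomial3 ![0, 1, 0], laurentMonomial3 ![1, -1, 0],
        laurentMonomial3 ![-((b₁ : ℤ) + 1), 1, 1]] p : AddMonoidAlgebra ℂ (Fin 3 → ℤ)) =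
      AddMonoidAlgebra.mapDomain (expMap3 b₁) p := by
  induction p using MvPolynomial.induction_on' with
  | add p q hp hq =>
      rw [map_add, hp, hq]
      exact (AddMonoidAlgebra.mapDomain_add _ _ _).symm
  | monomial d c =>
      rw [aeval_monomial,
        show (MvPolynomial.monomial d c : MvPolynomial (Fin 3) ℂ) = AddMonoidAlgebra.single d c from
          (MvPolynomial.single_eq_monomial d c).symm,
        AddMonoidAlgebra.mapDomain_single,
        Finsupp.prod_fintype _ _ (fun i => pow_zero _), Fin.prod_univ_three]
      simp only [Matrix.cons_val_zero, Matrix.cons_val_one, Matrix.head_cons,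
        Matrix.cons_val_two, Matrix.tail_cons]
      rw [lm_pow, lm_pow, lm_pow, lm_mul, lm_mul]
      have hexp : d 0 • ![(0:ℤ), 1, 0] + d 1 • ![(1:ℤ), -1, 0] + d 2 • ![-((b₁:ℤ)+1), 1, 1]
          = expMap3 b₁ d := by
        funext i
        fin_cases i <;> simp [expMap3] <;> try ring
      rw [hexp, laurentMonomial3]
      have halg : (algebraMap ℂ (AddMonoidAlgebra ℂ (Fin 3 → ℤ))) c
          = AddMonoidAlgebra.single 0 c := by
        rw [show (algebraMap ℂ (AddMonoidAlgebra ℂ (Fin 3 → ℤ))) c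
            = (AddMonoidAlgebra.single 0 ∘ algebraMap ℂ ℂ) c from
          congrFun AddMonoidAlgebra.coe_algebraMap c]
        simp
      rw [halg, AddMonoidAlgebra.single_mul_single, zero_add, mul_one]

lemma beta_inj (b₁ : ℕ) : Function.Injective
    (aeval ![laurentMonomial3 ![0, 1, 0], laurentMonomial3 ![1, -1, 0],
        laurentMonomial3 ![-((b₁ : ℤ) + 1), 1, 1]] :
      MvPolynomial (Fin 3) ℂ →ₐ[ℂ] AddMonoidAlgebra ℂ (Fin 3 → ℤ)) := by
  intro p q h
  have := AddMonoidAlgebra.mapDomain_injective (R := ℂ) (expMap3_inj b₁)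
    (a₁ := p) (a₂ := q)
  apply this
  rw [← aeval_eq_mapDomain, ← aeval_eq_mapDomain]
  exact h

theorem toric_ideal_case_3_1_1 (b₁ : ℕ) :
    RingHom.ker (MvPolynomial.aeval
        ![laurentMonomial3 ![1, 0, 0], laurentMonomial3 ![1, 0, 0],
          laurentMonomial3 ![0, 1, 0], laurentMonomial3 ![1, -1, 0],
          laurentMonomial3 ![-((b₁ : ℤ) + 1), 1, 1], laurentMonomial3 ![0, 0, 1]] :
      MvPolynomial (Fin 6) ℂ →ₐ[ℂ] AddMonoidAlgebra ℂ (Fin 3 → ℤ)) =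
    Ideal.span {(X 0 - X 2 * X 3 : MvPolynomial (Fin 6) ℂ),
      X 1 - X 2 * X 3, X 2 ^ b₁ * X 3 ^ (b₁ + 1) * X 4 - X 5} := by
  set w : Fin 6 → AddMonoidAlgebra ℂ (Fin 3 → ℤ) :=
    ![laurentMonomial3 ![1, 0, 0], laurentMonomial3 ![1, 0, 0],
      laurentMonomial3 ![0, 1, 0], laurentMonomial3 ![1, -1, 0],
      laurentMonomial3 ![-((b₁ : ℤ) + 1), 1, 1], laurentMonomial3 ![0, 0, 1]] with hw
  set α : MvPolynomial (Fin 6) ℂ →ₐ[ℂ] AddMonoidAlgebra ℂ (Fin 3 → ℤ) := aeval w with hα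
  set I : Ideal (MvPolynomial (Fin 6) ℂ) := Ideal.span {(X 0 - X 2 * X 3 : MvPolynomial (Fin 6) ℂ),
      X 1 - X 2 * X 3, X 2 ^ b₁ * X 3 ^ (b₁ + 1) * X 4 - X 5} with hI
  -- easy direction
  have hw0 : w 0 = laurentMonomial3 ![1, 0, 0] := rfl
  have hw1 : w 1 = laurentMonomial3 ![1, 0, 0] := rfl
  have hw2 : w 2 = laurentMonomial3 ![0, 1, 0] := rfl
  have hw3 : w 3 = laurentMonomial3 ![1, -1, 0] := rfl
  have hw4 : w 4 = laurentMonomial3 ![-((b₁ : ℤ) + 1), 1, 1] := rfl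
  have hw5 : w 5 = laurentMonomial3 ![0, 0, 1] := rfl
  have hg1 : α (X 0 - X 2 * X 3) = 0 := by
    rw [map_sub, map_mul, aeval_X, aeval_X, aeval_X, hw0, hw2, hw3, lm_mul]
    rw [show ![(0:ℤ),1,0] + ![(1:ℤ),-1,0] = ![(1:ℤ),0,0] by funext i; fin_cases i <;> simp]
    exact sub_self _
  have hg2 : α (X 1 - X 2 * X 3) = 0 := by
    rw [map_sub, map_mul, aeval_X, aeval_X, aeval_X, hw1, hw2, hw3, lm_mul]
    rw [show ![(0:ℤ),1,0] + ![(1:ℤ),-1,0] = ![(1:ℤ),0,0] by funext i; fin_cases i <;> simp]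
    exact sub_self _
  have hg3 : α (X 2 ^ b₁ * X 3 ^ (b₁ + 1) * X 4 - X 5) = 0 := by
    rw [map_sub, map_mul, map_mul, map_pow, map_pow, aeval_X, aeval_X, aeval_X, aeval_X,
      hw2, hw3, hw4, hw5, lm_pow, lm_pow, lm_mul, lm_mul]
    rw [show b₁ • ![(0:ℤ),1,0] + (b₁+1) • ![(1:ℤ),-1,0] + ![-((b₁:ℤ)+1),1,1] = ![(0:ℤ),0,1] by
      funext i; fin_cases i <;> simp <;> ring]
    exact sub_self _
  have heasy : I ≤ RingHom.ker α := by
    rw [hI, Ideal.span_le]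
    rintro x (rfl | rfl | rfl)
    · exact hg1
    · exact hg2
    · exact hg3
  -- the substitution homomorphisms
  set τ : MvPolynomial (Fin 6) ℂ →ₐ[ℂ] MvPolynomial (Fin 3) ℂ :=
    aeval ![X 0 * X 1, X 0 * X 1, X 0, X 1, X 2, X 0 ^ b₁ * X 1 ^ (b₁ + 1) * X 2] with hτ
  set ψ : MvPolynomial (Fin 3) ℂ →ₐ[ℂ] MvPolynomial (Fin 6) ℂ := aeval ![X 2, X 3, X 4] with hψ
  have hφX : ∀ i : Fin 6, X i - ψ (τ (X i)) ∈ I := by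
    intro i
    fin_cases i
    · show X (0 : Fin 6) - ψ (τ (X 0)) ∈ I
      have : X (0 : Fin 6) - ψ (τ (X 0)) = X 0 - X 2 * X 3 := by
        rw [hτ, hψ]; simp
      rw [this]
      exact Ideal.subset_span (Or.inl rfl)
    · show X (1 : Fin 6) - ψ (τ (X 1)) ∈ I
      have : X (1 : Fin 6) - ψ (τ (X 1)) = X 1 - X 2 * X 3 := by
        rw [hτ, hψ]; simp
      rw [this]
      exact Ideal.subset_span (Or.inr (Or.inl rfl))
    · rw [hτ, hψ]; simp
    · rw [hτ, hψ]; simp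
    · rw [hτ, hψ]; simp
    · show X (5 : Fin 6) - ψ (τ (X 5)) ∈ I
      have h5 : ψ (τ (X 5)) = X 2 ^ b₁ * X 3 ^ (b₁ + 1) * X 4 := by
        rw [hτ, aeval_X]
        show ψ (X 0 ^ b₁ * X 1 ^ (b₁ + 1) * X 2) = _
        rw [map_mul, map_mul, map_pow, map_pow, hψ, aeval_X, aeval_X, aeval_X]
        show (X 2 : MvPolynomial (Fin 6) ℂ) ^ b₁ * X 3 ^ (b₁ + 1) * X 4 = _
        rfl
      have : X (5 : Fin 6) - ψ (τ (X 5))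
          = -(X 2 ^ b₁ * X 3 ^ (b₁ + 1) * X 4 - X 5) := by
        rw [h5]; ring
      rw [this]
      exact neg_mem (Ideal.subset_span (Or.inr (Or.inr rfl)))
  have hkey : ∀ p : MvPolynomial (Fin 6) ℂ, p - ψ (τ p) ∈ I := by
    intro p
    induction p using MvPolynomial.induction_on with
    | C a => simp
    | add p q hp hq =>
        have : p + q - ψ (τ (p + q)) = (p - ψ (τ p)) + (q - ψ (τ q)) := by
          rw [map_add, map_add]; ring
        rw [this]; exact add_mem hp hq
    | mul_X p i hp =>
        have : p * X i - ψ (τ (p * X i))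
            = p * (X i - ψ (τ (X i))) + (p - ψ (τ p)) * ψ (τ (X i)) := by
          rw [map_mul, map_mul]; ring
        rw [this]
        exact add_mem (Ideal.mul_mem_left _ _ (hφX i)) (Ideal.mul_mem_right _ _ hp)
  -- injectivity
  have hcomp : (α.comp ψ : MvPolynomial (Fin 3) ℂ →ₐ[ℂ] AddMonoidAlgebra ℂ (Fin 3 → ℤ))
      = aeval ![laurentMonomial3 ![0, 1, 0], laurentMonomial3 ![1, -1, 0],
          laurentMonomial3 ![-((b₁ : ℤ) + 1), 1, 1]] := by
    apply MvPolynomial.algHom_ext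
    intro i
    fin_cases i <;> simp [hψ, hα, hw]
  have hinj : Function.Injective (α.comp ψ) := by
    rw [hcomp]; exact beta_inj b₁
  -- conclude
  apply le_antisymm _ heasy
  intro p hp
  rw [RingHom.mem_ker] at hp
  have h1 : α (p - ψ (τ p)) = 0 := heasy (hkey p)
  have h2 : α (ψ (τ p)) = 0 := by
    rw [map_sub, hp, zero_sub, neg_eq_zero] at h1
    exact h1
  have h3 : τ p = 0 := by
    apply hinj
    rw [map_zero, AlgHom.comp_apply]
    exact h2
  have := hkey p
  rwa [h3, map_zero, sub_zero] at this
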